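/- arXiv:2106.13852 — 8 statements merged into one kernel-verified Lean document; each statement's English description precedes it below -/
import Mathlib

section
/- If a set R of regions of a transition system consists of pairwise disjoint regions whose union covers all states, then for every event e and region r_i ∈ R such that e exits r_i, there exists a distinct region r_j ∈ R such that e enters r_j. -/
def Enters {S E : Type*} (T : S → E → S → Prop) (e : E) (r : Set S) : Prop :=
  ∃ s s', T s e s' ∧ s ∉ r ∧ s' ∈ r

def Exits {S E : Type*} (T : S → E → S → Prop) (e : E) (r : Set S) : Prop :=
  ∃ s s', T s e s' ∧ s ∈ r ∧ s' ∉ r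

def IsRegion {S E : Type*} (T : S → E → S → Prop) (r : Set S) : Prop :=
  r.Nonempty ∧ r ≠ Set.univ ∧
  ∀ e : E,
    (Enters T e r → ∀ s s', T s e s' → s ∉ r ∧ s' ∈ r) ∧
    (Exits T e r → ∀ s s', T s e s' → s ∈ r ∧ s' ∉ r)
/-- If an event exits a region of a disjoint covering set of regions, it
enters some other region of the set. -/
theorem exit_implies_enter {S E : Type*} (T : S → E → S → Prop)
    (hNoSelfLoop : ∀ s e s', T s e s' → s ≠ s')
    (R : Set (Set S))
    (hReg : ∀ r ∈ R, IsRegion T r)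
    (hDisj : ∀ r ∈ R, ∀ r' ∈ R, r ≠ r' → Disjoint r r')
    (hCov : ⋃₀ R = Set.univ) :
    ∀ e : E, ∀ ri ∈ R, Exits T e ri → ∃ rj ∈ R, rj ≠ ri ∧ Enters T e rj := by
  rintro e ri hri ⟨s, s', hT, hs, hs'⟩
  have : s' ∈ ⋃₀ R := hCov ▸ Set.mem_univ s'
  obtain ⟨rj, hrj, hs'j⟩ := this
  refine ⟨rj, hrj, ?_, s, s', hT, ?_, hs'j⟩
  · rintro rfl; exact hs' hs'j
  · intro hsj
    have hne : rj ≠ ri := by rintro rfl; exact hs' hs'j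
    exact (hDisj rj hrj ri hri hne).le_bot ⟨hsj, hs⟩
end

section
/- In a strongly connected transition system, every region is the pre-region of some event, i.e., for every region r there exists an event e and a transition labeled e exiting r. -/
/-- In a strongly connected transition system every region is a pre-region of
some event. -/
theorem region_is_preregion_of_strongly_connected {S E : Type*}
    (T : S → E → S → Prop)
    (hSC : ∀ s s' : S, Relation.ReflTransGen (fun a b => ∃ e, T a e b) s s') :
    ∀ r : Set S, IsRegion T r → ∃ e : E, Exits T e r := by
  intro r hr
  obtain ⟨⟨s, hs⟩, hne, _⟩ := hr
  obtain ⟨s', hs'⟩ : ∃ x, x ∉ r := by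
    by_contra h
    push_neg at h
    exact hne (Set.eq_univ_of_forall h)
  have key : ∀ a b : S, Relation.ReflTransGen (fun a b => ∃ e, T a e b) a b →
      a ∈ r → b ∉ r → ∃ e : E, Exits T e r := by
    intro a b hab
    induction hab with
    | refl => intro h1 h2; exact absurd h1 h2
    | tail _ hbc ih =>
      rename_i x y _
      intro ha hy
      obtain ⟨e, he⟩ := hbc
      by_cases hx : x ∈ r
      · exact ⟨e, x, y, he, hx, hy⟩
      · exact ih ha hx
  exact key s s' (hSC s s') hs hs'
end

section
/- If r1 and r2 are disjoint regions of a transition system and their union r1 ∪ r2 is a proper subset of the states, then r1 ∪ r2 is a region. -/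
/-- The union of two disjoint regions is a region, provided it is a proper
subset of the states. -/
theorem union_of_disjoint_regions {S E : Type*} (T : S → E → S → Prop)
    (r₁ r₂ : Set S) (h₁ : IsRegion T r₁) (h₂ : IsRegion T r₂)
    (hdisj : Disjoint r₁ r₂) (hproper : r₁ ∪ r₂ ≠ Set.univ) :
    IsRegion T (r₁ ∪ r₂) := by
  have hd : ∀ x, x ∈ r₁ → x ∉ r₂ := fun x hx => Set.disjoint_left.mp hdisj hx
  obtain ⟨⟨x, hx⟩, -, H1⟩ := h₁
  obtain ⟨-, -, H2⟩ := h₂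
  refine ⟨⟨x, Or.inl hx⟩, hproper, fun e => ⟨?_, ?_⟩⟩
  · rintro ⟨s₀, s₀', hT₀, hs₀, hs₀'⟩ s s' hT
    have hs₀1 : s₀ ∉ r₁ := fun h => hs₀ (Or.inl h)
    have hs₀2 : s₀ ∉ r₂ := fun h => hs₀ (Or.inr h)
    cases hs₀' with
    | inl h1 =>
      have this := (H1 e).1 ⟨s₀, s₀', hT₀, hs₀1, h1⟩ s s' hT
      refine ⟨?_, Or.inl this.2⟩
      rintro (hs | hs)
      · exact this.1 hs
      · exact hs₀2 ((H2 e).2 ⟨s, s', hT, hs, hd s' this.2⟩ s₀ s₀' hT₀).1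
    | inr h2 =>
      have this := (H2 e).1 ⟨s₀, s₀', hT₀, hs₀2, h2⟩ s s' hT
      refine ⟨?_, Or.inr this.2⟩
      rintro (hs | hs)
      · have hs'1 : s' ∉ r₁ := fun h => hd s' h this.2
        exact hs₀1 ((H1 e).2 ⟨s, s', hT, hs, hs'1⟩ s₀ s₀' hT₀).1
      · exact this.1 hs
  · rintro ⟨s₀, s₀', hT₀, hs₀, hs₀'⟩ s s' hT
    have hs₀'1 : s₀' ∉ r₁ := fun h => hs₀' (Or.inl h)
    have hs₀'2 : s₀' ∉ r₂ := fun h => hs₀' (Or.inr h)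
    cases hs₀ with
    | inl h1 =>
      have this := (H1 e).2 ⟨s₀, s₀', hT₀, h1, hs₀'1⟩ s s' hT
      refine ⟨Or.inl this.1, ?_⟩
      rintro (hs | hs)
      · exact this.2 hs
      · exact hs₀'2 ((H2 e).1 ⟨s, s', hT, hd s this.1, hs⟩ s₀ s₀' hT₀).2
    | inr h2 =>
      have this := (H2 e).2 ⟨s₀, s₀', hT₀, h2, hs₀'2⟩ s s' hT
      refine ⟨Or.inr this.1, ?_⟩
      rintro (hs | hs)
      · have hs1 : s ∉ r₁ := fun h => hd s h this.1
        exact hs₀'1 ((H1 e).1 ⟨s, s', hT, hs1, hs⟩ s₀ s₀' hT₀).2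
      · exact this.2 hs
end

section
/- Reachability is preserved in derived state machines: if a set R of pairwise disjoint regions covers all states of a transition system TS in which all states are reachable from the initial state, then in the derived state machine (states R, initial region containing s0, edge (r,e,r') when e exits r and enters r') every region is reachable from the initial region. -/
/-- In the state machine derived from a disjoint covering set of regions of a
transition system whose states are all reachable, every region is reachable
from the initial region. -/
theorem derived_SM_reachable {S E : Type*} (T : S → E → S → Prop) (s₀ : S)
    (hNoSelfLoop : ∀ s e s', T s e s' → s ≠ s')
    (hReach : ∀ s : S, Relation.ReflTransGen (fun a b => ∃ e, T a e b) s₀ s)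
    (R : Set (Set S))
    (hReg : ∀ r ∈ R, IsRegion T r)
    (hDisj : ∀ r ∈ R, ∀ r' ∈ R, r ≠ r' → Disjoint r r')
    (hCov : ⋃₀ R = Set.univ)
    (r₀ : Set S) (hr₀ : r₀ ∈ R) (hs₀ : s₀ ∈ r₀) :
    ∀ r ∈ R, Relation.ReflTransGen
      (fun a b => a ∈ R ∧ b ∈ R ∧ ∃ e, Exits T e a ∧ Enters T e b) r₀ r := by
  have key : ∀ s : S, ∀ r ∈ R, s ∈ r → Relation.ReflTransGen
      (fun a b => a ∈ R ∧ b ∈ R ∧ ∃ e, Exits T e a ∧ Enters T e b) r₀ r := by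
    intro s
    induction hReach s with
    | refl =>
      intro r hr hs
      have : r = r₀ := by
        by_contra hne
        exact (hDisj r hr r₀ hr₀ hne).ne_of_mem hs hs₀ rfl
      rw [this]
    | @tail a b _ hab ih =>
      intro r hr hb
      obtain ⟨e, hT⟩ := hab
      -- region containing a
      have ha' : a ∈ ⋃₀ R := by rw [hCov]; trivial
      obtain ⟨ra, hra, haa⟩ := ha'
      have ihra := ih ra hra haa
      by_cases hbra : b ∈ ra
      · have : r = ra := by
          by_contra hne
          exact (hDisj r hr ra hra hne).ne_of_mem hb hbra rfl
        rw [this]; exact ihra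
      · have hanr : a ∉ r := by
          intro har
          have : r = ra := by
            by_contra hne
            exact (hDisj r hr ra hra hne).ne_of_mem har haa rfl
          exact hbra (this ▸ hb)
        exact ihra.tail ⟨hra, hr, e, ⟨a, b, hT, haa, hbra⟩, ⟨a, b, hT, hanr, hb⟩⟩
  intro r hr
  obtain ⟨s, hs⟩ := (hReg r hr).1
  exact key s r hr hs
end

section
/- Forward simulation step for region decompositions: let TS be a transition system, and for i = 1..n let R_i be a disjoint covering set of regions of TS. Suppose s_j ∈ ⋂_i r_{j,i} with r_{j,i} ∈ R_i, and (s_j, e, s_k) ∈ T. Then for each i there exists r_{k,i} ∈ R_i with s_k ∈ r_{k,i}, such that either (a) no region of R_i is crossed by e and r_{k,i} = r_{j,i}, or (b) r_{j,i} is a pre-region of e in R_i and r_{k,i} is the post-region of e in R_i. Consequently s_k ∈ ⋂_i r_{k,i}. -/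
/-- Forward simulation step for region decompositions. -/
theorem forward_simulation_step {S E ι : Type*} (T : S → E → S → Prop)
    (hNoSelfLoop : ∀ s e s', T s e s' → s ≠ s')
    (R : ι → Set (Set S))
    (hReg : ∀ i, ∀ r ∈ R i, IsRegion T r)
    (hDisj : ∀ i, ∀ r ∈ R i, ∀ r' ∈ R i, r ≠ r' → Disjoint r r')
    (hCov : ∀ i, ⋃₀ R i = Set.univ)
    (sj sk : S) (e : E)
    (rj : ι → Set S) (hrj : ∀ i, rj i ∈ R i ∧ sj ∈ rj i)
    (hT : T sj e sk) :
    ∃ rk : ι → Set S,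
      (∀ i, rk i ∈ R i ∧ sk ∈ rk i ∧
        (((¬ ∃ r ∈ R i, Exits T e r ∨ Enters T e r) ∧ rk i = rj i) ∨
          (Exits T e (rj i) ∧ Enters T e (rk i)))) ∧
      sk ∈ ⋂ i, rk i := by
  have key : ∀ i, ∃ r, r ∈ R i ∧ sk ∈ r ∧
      (((¬ ∃ r' ∈ R i, Exits T e r' ∨ Enters T e r') ∧ r = rj i) ∨
        (Exits T e (rj i) ∧ Enters T e r)) := by
    intro i
    obtain ⟨hrjR, hsj⟩ := hrj i
    -- sk is in some region of R i
    have hskcov : sk ∈ ⋃₀ R i := by rw [hCov]; trivial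
    obtain ⟨r, hrR, hskr⟩ := hskcov
    by_cases hcross : ∃ r' ∈ R i, Exits T e r' ∨ Enters T e r'
    · obtain ⟨r', hr'R, hcr⟩ := hcross
      rcases hcr with hex | hen
      · -- all e-transitions exit r'
        have h := ((hReg i r' hr'R).2.2 e).2 hex sj sk hT
        have hrj_eq : rj i = r' := by
          by_contra hne
          exact (hDisj i (rj i) hrjR r' hr'R hne).le_bot ⟨hsj, h.1⟩ |>.elim
        have hExRj : Exits T e (rj i) := ⟨sj, sk, hT, hsj, hrj_eq ▸ h.2⟩
        have hsknrj : sk ∉ rj i := hrj_eq ▸ h.2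
        have hne : r ≠ rj i := fun heq => hsknrj (heq ▸ hskr)
        have hsjnr : sj ∉ r := fun hs =>
          (hDisj i r hrR (rj i) hrjR hne).le_bot ⟨hs, hsj⟩
        exact ⟨r, hrR, hskr, Or.inr ⟨hExRj, sj, sk, hT, hsjnr, hskr⟩⟩
      · -- all e-transitions enter r'
        have h := ((hReg i r' hr'R).2.2 e).1 hen sj sk hT
        have hne : rj i ≠ r' := fun heq => h.1 (heq ▸ hsj)
        have hsknrj : sk ∉ rj i := fun hs =>
          (hDisj i (rj i) hrjR r' hr'R hne).le_bot ⟨hs, h.2⟩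
        exact ⟨r', hr'R, h.2, Or.inr ⟨⟨sj, sk, hT, hsj, hsknrj⟩, hen⟩⟩
    · -- no crossing: sk must stay in rj i
      have hsk : sk ∈ rj i := by
        by_contra hns
        exact hcross ⟨rj i, hrjR, Or.inl ⟨sj, sk, hT, hsj, hns⟩⟩
      exact ⟨rj i, hrjR, hsk, Or.inl ⟨hcross, rfl⟩⟩
  choose rk h1 h2 h3 using key
  exact ⟨rk, fun i => ⟨h1 i, h2 i, h3 i⟩, Set.mem_iInter.2 h2⟩
end

section
/- Main equivalence theorem: let TS = (S, E, T, s0) be a transition system with no self-loops, and let SM_1, ..., SM_n be state machines derived from disjoint covering sets of regions R_1, ..., R_n of TS such that the union of all these regions satisfies excitation closure (for every event e, the intersection of all pre-regions of e in ⋃ R_i equals ES(e)) and event effectiveness (every event has a pre-region in ⋃ R_i). Then the relation B = { (s, (r_1,...,r_n)) : s ∈ ⋂_i r_i } is a bisimulation between TS and the synchronous product RG(SM_1) || ... || RG(SM_n). -/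
/-- The excitation set of an event. -/
def ES {S E : Type*} (T : S → E → S → Prop) (e : E) : Set S :=
  {s | ∃ s', T s e s'}

/-- e is an event of the state machine derived from the set of regions Rᵢ,
i.e. it crosses some region of Rᵢ. -/
def SMEvent {S E : Type*} (T : S → E → S → Prop) (Rᵢ : Set (Set S))
    (e : E) : Prop :=
  ∃ r ∈ Rᵢ, Exits T e r ∨ Enters T e r

/-- Transition relation of the synchronous product of the reachability graphs
of the state machines derived from the sets of regions R i: a shared event
fires synchronously in all components containing it, and leaves the other
components unchanged. -/
def ProdSMT {S E ι : Type*} (T : S → E → S → Prop) (R : ι → Set (Set S)) :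
    (ι → Set S) → E → (ι → Set S) → Prop :=
  fun ρ e ρ' =>
    (∃ i, SMEvent T (R i) e) ∧
    ∀ i, (SMEvent T (R i) e →
            ρ i ∈ R i ∧ ρ' i ∈ R i ∧ Exits T e (ρ i) ∧ Enters T e (ρ' i)) ∧
         (¬ SMEvent T (R i) e → ρ' i = ρ i)

def IsBisimulation {S₁ S₂ E : Type*} (T₁ : S₁ → E → S₁ → Prop)
    (T₂ : S₂ → E → S₂ → Prop) (s₀₁ : S₁) (s₀₂ : S₂)
    (B : S₁ → S₂ → Prop) : Prop :=
  B s₀₁ s₀₂ ∧ ∀ p q, B p q →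
    (∀ e p', T₁ p e p' → ∃ q', T₂ q e q' ∧ B p' q') ∧
    (∀ e q', T₂ q e q' → ∃ p', T₁ p e p' ∧ B p' q')

/-- Main equivalence theorem: under excitation closure and event effectiveness
of the union of the region sets, the relation B = {(s, ρ) : s ∈ ⋂ i, ρ i} is a
bisimulation between the transition system and the synchronous product of the
derived state machines. -/
theorem TS_bisimilar_product_of_SMs {S E ι : Type*} (T : S → E → S → Prop)
    (s₀ : S)
    (hNoSelfLoop : ∀ s e s', T s e s' → s ≠ s')
    (R : ι → Set (Set S))
    (hReg : ∀ i, ∀ r ∈ R i, IsRegion T r)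
    (hDisj : ∀ i, ∀ r ∈ R i, ∀ r' ∈ R i, r ≠ r' → Disjoint r r')
    (hCov : ∀ i, ⋃₀ R i = Set.univ)
    (hEC : ∀ e : E, ⋂₀ {r | (∃ i, r ∈ R i) ∧ Exits T e r} = ES T e)
    (hEff : ∀ e : E, ∃ r, (∃ i, r ∈ R i) ∧ Exits T e r)
    (ρ₀ : ι → Set S) (hρ₀ : ∀ i, ρ₀ i ∈ R i ∧ s₀ ∈ ρ₀ i) :
    IsBisimulation T (ProdSMT T R) s₀ ρ₀
      (fun s ρ => (∀ i, ρ i ∈ R i) ∧ s ∈ ⋂ i, ρ i) := by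
  classical
  have heq : ∀ i, ∀ r ∈ R i, ∀ r' ∈ R i, ∀ x, x ∈ r → x ∈ r' → r = r' := by
    intro i r hr r' hr' x hx hx'
    by_contra h
    exact Set.disjoint_left.1 (hDisj i r hr r' hr' h) hx hx'
  refine ⟨⟨fun i => (hρ₀ i).1, Set.mem_iInter.2 fun i => (hρ₀ i).2⟩, ?_⟩
  rintro s ρ ⟨hρR, hsρ⟩
  have hsρi : ∀ i, s ∈ ρ i := fun i => Set.mem_iInter.1 hsρ i
  constructor
  · intro e s' hT
    have hch : ∀ i, ∃ r, r ∈ R i ∧ s' ∈ r := fun i => by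
      have h1 : s' ∈ ⋃₀ R i := by rw [hCov i]; exact Set.mem_univ s'
      obtain ⟨r, hr, hs'⟩ := h1
      exact ⟨r, hr, hs'⟩
    choose r' hr'R hs'r' using hch
    have hnot : ∀ i, SMEvent T (R i) e → s' ∉ ρ i := by
      rintro i ⟨r, hrR, hcross⟩ hs'
      rcases hcross with hex | hen
      · have h2 := ((hReg i r hrR).2.2 e).2 hex s s' hT
        have hre : r = ρ i := heq i r hrR (ρ i) (hρR i) s h2.1 (hsρi i)
        exact h2.2 (hre ▸ hs')
      · have h2 := ((hReg i r hrR).2.2 e).1 hen s s' hT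
        have hre : r = ρ i := heq i r hrR (ρ i) (hρR i) s' h2.2 hs'
        exact h2.1 (hre ▸ hsρi i)
    refine ⟨fun i => if h : SMEvent T (R i) e then r' i else ρ i, ?_, ?_⟩
    · refine ⟨?_, fun i => ⟨fun hse => ?_, fun hns => by simp [hns]⟩⟩
      · obtain ⟨r, ⟨i, hri⟩, hex⟩ := hEff e
        exact ⟨i, r, hri, Or.inl hex⟩
      · simp only [dif_pos hse]
        refine ⟨hρR i, hr'R i, ⟨s, s', hT, hsρi i, hnot i hse⟩,
          ⟨s, s', hT, ?_, hs'r' i⟩⟩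
        intro hs
        have h3 : r' i = ρ i := heq i (r' i) (hr'R i) (ρ i) (hρR i) s hs (hsρi i)
        exact hnot i hse (h3 ▸ hs'r' i)
    · constructor
      · intro i; by_cases h : SMEvent T (R i) e <;> simp [h, hr'R i, hρR i]
      · refine Set.mem_iInter.2 fun i => ?_
        by_cases h : SMEvent T (R i) e
        · simp only [dif_pos h]; exact hs'r' i
        · simp only [dif_neg h]
          by_contra hs'
          exact h ⟨ρ i, hρR i, Or.inl ⟨s, s', hT, hsρi i, hs'⟩⟩
  · intro e ρ' hP
    obtain ⟨⟨j, hj⟩, hall⟩ := hP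
    have hsES : s ∈ ES T e := by
      rw [← hEC e]
      refine Set.mem_sInter.2 ?_
      rintro r ⟨⟨i, hrR⟩, hex⟩
      have hse : SMEvent T (R i) e := ⟨r, hrR, Or.inl hex⟩
      obtain ⟨-, -, ⟨a, b, hab, haρ, hbρ⟩, -⟩ := (hall i).1 hse
      have h2 := ((hReg i r hrR).2.2 e).2 hex a b hab
      have h3 : r = ρ i := heq i r hrR (ρ i) (hρR i) a h2.1 haρ
      exact h3 ▸ hsρi i
    obtain ⟨s', hT⟩ := hsES
    refine ⟨s', hT, ?_, Set.mem_iInter.2 fun i => ?_⟩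
    · intro i
      by_cases h : SMEvent T (R i) e
      · exact ((hall i).1 h).2.1
      · rw [(hall i).2 h]; exact hρR i
    · by_cases h : SMEvent T (R i) e
      · obtain ⟨-, hρ'R, -, hen⟩ := (hall i).1 h
        exact (((hReg i _ hρ'R).2.2 e).1 hen s s' hT).2
      · rw [(hall i).2 h]
        by_contra hs'
        exact h ⟨ρ i, hρR i, Or.inl ⟨s, s', hT, hsρi i, hs'⟩⟩
end

section
/- If two states s1, s2 of a transition system belong to exactly the same regions of an excitation-closed collection R (i.e., ∀ r ∈ R, s1 ∈ r ↔ s2 ∈ r), then s1 and s2 enable exactly the same events: for every event e, e is enabled at s1 iff e is enabled at s2. -/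
/-- States belonging to exactly the same regions of an excitation-closed
collection enable exactly the same events. -/
theorem same_regions_same_enabled_events {S E : Type*}
    (T : S → E → S → Prop) (R : Set (Set S))
    (hReg : ∀ r ∈ R, IsRegion T r)
    (hEC : ∀ e : E, ⋂₀ {r | r ∈ R ∧ Exits T e r} = ES T e)
    (hEff : ∀ e : E, ∃ r ∈ R, Exits T e r)
    (s₁ s₂ : S) (hsame : ∀ r ∈ R, s₁ ∈ r ↔ s₂ ∈ r) :
    ∀ e : E, (∃ s', T s₁ e s') ↔ (∃ s', T s₂ e s') := by
  intro e
  have key : ∀ s t : S, (∀ r ∈ R, s ∈ r ↔ t ∈ r) →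
      (∃ s', T s e s') → (∃ s', T t e s') := by
    intro s t hst hs
    have hsES : s ∈ ES T e := hs
    rw [← hEC e] at hsES
    have : t ∈ ⋂₀ {r | r ∈ R ∧ Exits T e r} := by
      intro r hr
      exact (hst r hr.1).mp (hsES r hr)
    rw [hEC e] at this
    exact this
  exact ⟨key s₁ s₂ hsame, key s₂ s₁ fun r hr => (hsame r hr).symm⟩
end

section
/- In a state machine derived from a disjoint covering set of regions, every label appears on exactly one edge or on no edge: for any event e, there is at most one pair (r, r') of regions in R with an edge (r, e, r'). -/
/-- In a state machine derived from a disjoint covering set of regions, every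
label appears on at most one edge. -/
theorem label_on_at_most_one_edge {S E : Type*} (T : S → E → S → Prop)
    (hNoSelfLoop : ∀ s e s', T s e s' → s ≠ s')
    (R : Set (Set S))
    (hReg : ∀ r ∈ R, IsRegion T r)
    (hDisj : ∀ r ∈ R, ∀ r' ∈ R, r ≠ r' → Disjoint r r')
    (hCov : ⋃₀ R = Set.univ) :
    ∀ e : E, ∀ r₁ ∈ R, ∀ r₁' ∈ R, ∀ r₂ ∈ R, ∀ r₂' ∈ R,
      Exits T e r₁ → Enters T e r₁' → Exits T e r₂ → Enters T e r₂' →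
      r₁ = r₂ ∧ r₁' = r₂' := by
  intro e r₁ h₁ r₁' h₁' r₂ h₂ r₂' h₂' hx₁ hn₁ hx₂ hn₂
  obtain ⟨s, s', hT, hs, hs'⟩ := hx₁
  have p2 := ((hReg r₂ h₂).2.2 e).2 hx₂ s s' hT
  have q1 := ((hReg r₁' h₁').2.2 e).1 hn₁ s s' hT
  have q2 := ((hReg r₂' h₂').2.2 e).1 hn₂ s s' hT
  constructor
  · by_contra h
    exact (hDisj r₁ h₁ r₂ h₂ h).ne_of_mem hs p2.1 rfl
  · by_contra h
    exact (hDisj r₁' h₁' r₂' h₂' h).ne_of_mem q1.2 q2.2 rfl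
end
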